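/- Define h₁ as in the paper (h₁ = 1 on (-∞,0], 1/2 on (0,1], 1/(2x²) on [1,√2), g on [√2,√3], h on [√3,∞), with g(x) = (c₁/250)(251Φ̄(x)+φ(x)), h = c₂Φ̄, c₁ = 1/(4Φ̄(√2)), c₂ = c₁(1+(1+r(√3))/250)). For every a ∈ [0,1) and x ≥ √3, with u = (x-a)/√(1-a²) and v = (x+a)/√(1-a²), one has h₁(u) + h₁(v) - 2h₁(x) ≤ 0. -/

import Mathlib

open MeasureTheory Real Set

noncomputable def phi (x : ℝ) : ℝ := Real.exp (-x^2/2) / Real.sqrt (2*Real.pi)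
noncomputable def Phibar (x : ℝ) : ℝ := ∫ u in Set.Ioi x, phi u
noncomputable def mills (x : ℝ) : ℝ := phi x / Phibar x
noncomputable def c1 : ℝ := 1 / (4 * Phibar (Real.sqrt 2))
noncomputable def c2 : ℝ := c1 * (1 + (1 + mills (Real.sqrt 3))/250)
noncomputable def g (x : ℝ) : ℝ := c1/250 * (251 * Phibar x + phi x)
noncomputable def h (x : ℝ) : ℝ := c2 * Phibar x

noncomputable def h1 (x : ℝ) : ℝ :=
  if x ≤ 0 then 1
  else if x ≤ 1 then 1/2
  else if x < Real.sqrt 2 then 1/(2*x^2)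
  else if x ≤ Real.sqrt 3 then g x
  else h x

lemma phi_pos (x : ℝ) : 0 < phi x := by
  apply div_pos (Real.exp_pos _)
  positivity

lemma phi_cont : Continuous phi := by
  unfold phi
  fun_prop

lemma integrable_phi : Integrable phi := by
  have h : Integrable (fun x : ℝ => Real.exp (-(1/2 : ℝ) * x ^ 2)) := integrable_exp_neg_mul_sq (by norm_num)
  have := h.div_const (Real.sqrt (2*Real.pi))
  refine this.congr ?_
  filter_upwards with x
  unfold phi
  ring_nf

lemma integrableOn_phi (s : Set ℝ) : IntegrableOn phi s := integrable_phi.integrableOn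

lemma hasDerivAt_Phibar (x : ℝ) : HasDerivAt Phibar (-phi x) x := by
  have key : ∀ y : ℝ, Phibar y = (∫ u, phi u) - ((∫ u in Iic (0:ℝ), phi u) + ∫ u in (0:ℝ)..y, phi u) := by
    intro y
    rw [← intervalIntegral.integral_Iic_sub_Iic (integrableOn_phi _) (integrableOn_phi _)]
    have := intervalIntegral.integral_Iic_add_Ioi (f := phi) (b := y) (μ := volume)
      (integrableOn_phi _) (integrableOn_phi _)
    unfold Phibar
    linarith
  have hd : HasDerivAt (fun y => (∫ u, phi u) - ((∫ u in Iic (0:ℝ), phi u) + ∫ u in (0:ℝ)..y, phi u)) (-phi x) x := by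
    have h2 : HasDerivAt (fun y => ∫ u in (0:ℝ)..y, phi u) (phi x) x := by
      apply intervalIntegral.integral_hasDerivAt_right
        (integrable_phi.intervalIntegrable)
        (phi_cont.stronglyMeasurableAtFilter _ _) phi_cont.continuousAt
    simpa using ((h2.const_add _).const_sub _)
  exact hd.congr_deriv rfl |>.congr_of_eventuallyEq (by filter_upwards with y; rw [key y])

lemma Phibar_pos (x : ℝ) : 0 < Phibar x := by
  have h1 : (0:ℝ) < ∫ u in x..(x+1), phi u :=
    intervalIntegral.intervalIntegral_pos_of_pos (integrable_phi.intervalIntegrable) phi_pos (by linarith)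
  have h2 : (∫ u in x..(x+1), phi u) ≤ Phibar x := by
    rw [intervalIntegral.integral_of_le (by linarith)]
    apply setIntegral_mono_set (integrableOn_phi _)
      (Filter.Eventually.of_forall fun y => (phi_pos y).le)
    exact Filter.Eventually.of_forall (Ioc_subset_Ioi_self)
  linarith

lemma integrable_id_mul_phi : Integrable (fun t : ℝ => t * phi t) := by
  have h : Integrable (fun t : ℝ => t * Real.exp (-(1/2:ℝ) * t ^ 2)) := by
    simpa using integrable_mul_exp_neg_mul_sq (b := (1/2:ℝ)) (by norm_num)
  refine (h.div_const (Real.sqrt (2*Real.pi))).congr ?_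
  filter_upwards with t
  unfold phi
  ring_nf

lemma integral_id_mul_phi (x : ℝ) : ∫ t in Ioi x, t * phi t = phi x := by
  have hderiv : ∀ t ∈ Ioi x, HasDerivAt (fun s => -phi s) (t * phi t) t := by
    intro t _
    have h1 : HasDerivAt (fun s : ℝ => -s^2/2) (-t) t := by
      have := ((hasDerivAt_pow 2 t).neg).div_const 2
      simpa using this.congr_deriv (by ring)
    have h2 : HasDerivAt (fun s : ℝ => Real.exp (-s^2/2)) (Real.exp (-t^2/2) * (-t)) t :=
      (Real.hasDerivAt_exp _).comp t h1
    have h3 := (h2.div_const (Real.sqrt (2*Real.pi))).neg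
    unfold phi
    refine h3.congr_deriv ?_
    field_simp
  have htend : Filter.Tendsto (fun s => -phi s) Filter.atTop (nhds 0) := by
    have : Filter.Tendsto phi Filter.atTop (nhds 0) := by
      have h : Filter.Tendsto (fun t : ℝ => Real.exp (-t^2/2)) Filter.atTop (nhds 0) := by
        have hsq : Filter.Tendsto (fun t : ℝ => t^2/2) Filter.atTop Filter.atTop := by
          have h2 : Filter.Tendsto (fun t : ℝ => t^2) Filter.atTop Filter.atTop := by
            simpa [sq] using Filter.Tendsto.atTop_mul_atTop₀ (Filter.tendsto_id (α := ℝ)) Filter.tendsto_id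
          exact h2.atTop_div_const (by norm_num)
        have := Real.tendsto_exp_atBot.comp (Filter.tendsto_neg_atTop_atBot.comp hsq)
        exact this.congr (fun t => by simp [Function.comp, neg_div])
      have := h.div_const (Real.sqrt (2*Real.pi))
      rw [zero_div] at this; exact this
    simpa using this.neg
  have := MeasureTheory.integral_Ioi_of_hasDerivAt_of_tendsto
    (f := fun s => -phi s) (f' := fun t => t * phi t) (a := x)
    ((phi_cont.neg).continuousWithinAt) hderiv integrable_id_mul_phi.integrableOn htend
  simpa using this

lemma Phibar_le (x : ℝ) (hx : 0 < x) : x * Phibar x ≤ phi x := by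
  rw [← integral_id_mul_phi x]
  unfold Phibar
  rw [← integral_const_mul]
  apply setIntegral_mono_on ((integrableOn_phi _).const_mul x)
    integrable_id_mul_phi.integrableOn measurableSet_Ioi
  intro t ht
  have := (phi_pos t).le
  nlinarith [le_of_lt ht.out]

lemma hasDerivAt_phi (t : ℝ) : HasDerivAt phi (-t * phi t) t := by
  have h1 : HasDerivAt (fun s : ℝ => -s^2/2) (-t) t := by
    have := ((hasDerivAt_pow 2 t).neg).div_const 2
    simpa using this.congr_deriv (by ring)
  have h2 : HasDerivAt (fun s : ℝ => Real.exp (-s^2/2)) (Real.exp (-t^2/2) * (-t)) t :=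
    (Real.hasDerivAt_exp _).comp t h1
  have h3 := h2.div_const (Real.sqrt (2*Real.pi))
  unfold phi
  refine h3.congr_deriv ?_
  field_simp

lemma Phibar_cont : Continuous Phibar :=
  Differentiable.continuous (fun x => (hasDerivAt_Phibar x).differentiableAt)

lemma D_nonneg {t : ℝ} (ht2 : Real.sqrt 2 ≤ t) (ht3 : t ≤ Real.sqrt 3) :
    0 ≤ phi (Real.sqrt 3) * Phibar t - phi t * Phibar (Real.sqrt 3) := by
  set s3 := Real.sqrt 3
  set f : ℝ → ℝ := fun u => phi s3 * Phibar u - phi u * Phibar s3 with hf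
  have hderiv : ∀ u : ℝ, HasDerivAt f (phi u * (u * Phibar s3 - phi s3)) u := by
    intro u
    have := (((hasDerivAt_Phibar u).const_mul (phi s3)).sub ((hasDerivAt_phi u).mul_const (Phibar s3)))
    refine this.congr_deriv ?_
    ring
  have hanti : AntitoneOn f (Icc (Real.sqrt 2) s3) := by
    apply antitoneOn_of_deriv_nonpos (convex_Icc _ _)
    · exact ((continuous_const.mul Phibar_cont).sub (phi_cont.mul continuous_const)).continuousOn
    · intro u _
      exact (hderiv u).differentiableAt.differentiableWithinAt
    · intro u hu
      rw [(hderiv u).deriv]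
      have hu3 : u < s3 := by
        rw [interior_Icc] at hu
        exact hu.2
      have hu2 : Real.sqrt 2 < u := by
        rw [interior_Icc] at hu
        exact hu.1
      have hpos : (0:ℝ) < u := lt_trans (by positivity) hu2
      have h3 : s3 * Phibar s3 ≤ phi s3 := Phibar_le s3 (by positivity)
      have : u * Phibar s3 ≤ s3 * Phibar s3 :=
        mul_le_mul_of_nonneg_right hu3.le (Phibar_pos s3).le
      nlinarith [phi_pos u]
  have h23 : Real.sqrt 2 ≤ s3 := Real.sqrt_le_sqrt (by norm_num)
  have := hanti ⟨ht2, ht3⟩ ⟨h23, le_refl s3⟩ ht3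
  simpa [hf] using this

lemma c1_pos : 0 < c1 := by
  unfold c1
  have := Phibar_pos (Real.sqrt 2)
  positivity

lemma g_le_h {t : ℝ} (ht2 : Real.sqrt 2 ≤ t) (ht3 : t ≤ Real.sqrt 3) : g t ≤ h t := by
  have hD := D_nonneg ht2 ht3
  have hP3 := Phibar_pos (Real.sqrt 3)
  set s3 := Real.sqrt 3
  have key : (251 * Phibar t + phi t)/250 ≤ (1 + (1 + phi s3/Phibar s3)/250) * Phibar t := by
    have expand : (1 + (1 + phi s3/Phibar s3)/250) * Phibar t
        = (251*Phibar t + (phi s3/Phibar s3)*Phibar t)/250 := by ring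
    rw [expand]
    gcongr (?_)/250
    have : phi t ≤ (phi s3/Phibar s3)*Phibar t := by
      rw [div_mul_eq_mul_div, le_div_iff₀ hP3]
      linarith
    linarith
  have := mul_le_mul_of_nonneg_left key c1_pos.le
  unfold g h c2 mills
  calc c1/250 * (251 * Phibar t + phi t) = c1 * ((251 * Phibar t + phi t)/250) := by ring
    _ ≤ c1 * ((1 + (1 + phi s3/Phibar s3)/250) * Phibar t) := this
    _ = c1 * (1 + (1 + phi s3 / Phibar s3) / 250) * Phibar t := by ring

lemma g_eq_h_sqrt3 : g (Real.sqrt 3) = h (Real.sqrt 3) := by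
  have hP3 := (Phibar_pos (Real.sqrt 3)).ne'
  unfold g h c2 mills
  field_simp
  ring

lemma artanh_ineq {t : ℝ} (ht0 : 0 ≤ t) (ht1 : t < 1) :
    6*t/(3-t^2) ≤ Real.log (1+t) - Real.log (1-t) := by
  set ψ : ℝ → ℝ := fun s => Real.log (1+s) - Real.log (1-s) - 6*s/(3-s^2) with hψ
  have hd : ∀ s : ℝ, 0 ≤ s → s < 1 →
      HasDerivAt ψ (1/(1+s) + 1/(1-s) - (18+6*s^2)/(3-s^2)^2) s := by
    intro s hs0 hs1
    have h1s : (1:ℝ) + s ≠ 0 := by linarith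
    have h1s' : (1:ℝ) - s ≠ 0 := by linarith
    have h3s : (3:ℝ) - s^2 ≠ 0 := by nlinarith
    have ha : HasDerivAt (fun s : ℝ => Real.log (1+s)) (1/(1+s)) s := by
      have := (Real.hasDerivAt_log h1s).comp s (((hasDerivAt_id s).const_add 1))
      exact this.congr_deriv (by simp [one_div])
    have hb : HasDerivAt (fun s : ℝ => Real.log (1-s)) (-(1/(1-s))) s := by
      have := (Real.hasDerivAt_log h1s').comp s (((hasDerivAt_id s).const_sub 1))
      exact this.congr_deriv (by simp [one_div])
    have hc : HasDerivAt (fun s : ℝ => 6*s/(3-s^2)) ((18+6*s^2)/(3-s^2)^2) s := by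
      have hnum : HasDerivAt (fun s : ℝ => 6*s) 6 s := by
        simpa using (hasDerivAt_id s).const_mul 6
      have hden : HasDerivAt (fun s : ℝ => 3-s^2) (-(2*s)) s := by
        simpa using ((hasDerivAt_pow 2 s)).const_sub 3
      have := hnum.div hden h3s
      refine this.congr_deriv ?_
      field_simp
      ring
    have := (ha.sub hb).sub hc
    refine this.congr_deriv ?_
    ring
  have hmono : MonotoneOn ψ (Icc 0 t) := by
    rcases eq_or_lt_of_le ht0 with rfl | ht0'
    · intro a ha b hb hab
      simp_all [le_antisymm ha.2 ha.1, le_antisymm hb.2 hb.1]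
    apply monotoneOn_of_deriv_nonneg (convex_Icc _ _)
    · intro s hs
      exact (hd s hs.1 (lt_of_le_of_lt hs.2 ht1)).continuousAt.continuousWithinAt
    · intro s hs
      rw [interior_Icc] at hs
      exact (hd s hs.1.le (lt_trans hs.2 ht1)).differentiableAt.differentiableWithinAt
    · intro s hs
      rw [interior_Icc] at hs
      obtain ⟨hs0, hst⟩ := hs
      have hs1 : s < 1 := lt_trans hst ht1
      rw [(hd s hs0.le hs1).deriv]
      have h1 : (0:ℝ) < 1 + s := by linarith
      have h2 : (0:ℝ) < 1 - s := by linarith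
      have h3 : (0:ℝ) < 3 - s^2 := by nlinarith
      have key : (18+6*s^2)/(3-s^2)^2 ≤ 2/(1-s^2) := by
        rw [div_le_div_iff₀ (by positivity) (by nlinarith)]
        nlinarith [sq_nonneg s, sq_nonneg (s^2), pow_pos h3 2]
      have h4 : (1:ℝ) - s^2 ≠ 0 := by nlinarith
      have e : 1/(1+s) + 1/(1-s) = 2/(1-s^2) := by
        field_simp
        ring
      linarith [e ▸ key]
  have h0 : ψ 0 = 0 := by simp [hψ]
  have := hmono (left_mem_Icc.mpr ht0) (right_mem_Icc.mpr ht0) ht0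
  rw [h0] at this
  simp only [hψ] at this
  linarith

lemma key_ineq {x s : ℝ} (hx : Real.sqrt 3 ≤ x) (hs0 : 0 < s) (hs1 : s < 1) :
    0 ≤ phi ((x-s)/Real.sqrt (1-s^2)) * (s*x-1) + phi ((x+s)/Real.sqrt (1-s^2)) * (s*x+1) := by
  have hx0 : (0:ℝ) < x := lt_of_lt_of_le (by positivity) hx
  have hx3 : (3:ℝ) ≤ x^2 := by
    nlinarith [Real.sq_sqrt (by norm_num : (0:ℝ) ≤ 3), Real.sqrt_nonneg 3]
  have hs2 : (0:ℝ) < 1 - s^2 := by nlinarith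
  set w := Real.sqrt (1-s^2) with hw
  have hwpos : 0 < w := Real.sqrt_pos.mpr hs2
  have hwsq : w^2 = 1-s^2 := Real.sq_sqrt hs2.le
  set t := s*x with hts
  have ht0 : 0 < t := by positivity
  rcases le_or_gt 1 t with h1t | ht1
  · have := (phi_pos ((x-s)/w)).le
    have := (phi_pos ((x+s)/w)).le
    nlinarith
  · have hrel : phi ((x+s)/w) = phi ((x-s)/w) * Real.exp (-(2*t/(1-s^2))) := by
      have hA : ((x+s)/w)^2 = ((x-s)/w)^2 + 4*t/(1-s^2) := by
        rw [div_pow, div_pow, hwsq, hts]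
        field_simp
        ring
      unfold phi
      rw [hA, show -((((x-s)/w)^2 + 4*t/(1-s^2)))/2
            = -((x-s)/w)^2/2 + (-(2*t/(1-s^2))) from by ring, Real.exp_add]
      ring
    have hss : s^2 ≤ t^2/3 := by
      have h : t^2 = s^2 * x^2 := by rw [hts]; ring
      rw [h, le_div_iff₀ (by norm_num : (0:ℝ) < 3)]
      nlinarith [sq_nonneg s]
    have h3t : (0:ℝ) < 3 - t^2 := by nlinarith
    have hexp : 2*t/(1-s^2) ≤ Real.log (1+t) - Real.log (1-t) := by
      have h1 : 2*t/(1-s^2) ≤ 2*t/(1-t^2/3) := by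
        apply div_le_div_of_nonneg_left (by linarith) (by nlinarith) (by linarith)
      have h2 : 2*t/(1-t^2/3) = 6*t/(3-t^2) := by
        rw [div_eq_div_iff (by nlinarith) (by nlinarith)]
        ring
      calc 2*t/(1-s^2) ≤ 6*t/(3-t^2) := h2 ▸ h1
        _ ≤ _ := artanh_ineq ht0.le ht1
    have hE : Real.exp (2*t/(1-s^2)) ≤ (1+t)/(1-t) := by
      have := Real.exp_le_exp.mpr hexp
      rwa [Real.exp_sub, Real.exp_log (by linarith), Real.exp_log (by linarith)] at this
    have h5 : (1-t) * Real.exp (2*t/(1-s^2)) ≤ 1+t := by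
      have := mul_le_mul_of_nonneg_left hE (by linarith : (0:ℝ) ≤ 1-t)
      calc (1-t) * Real.exp (2*t/(1-s^2)) ≤ (1-t) * ((1+t)/(1-t)) := this
        _ = 1+t := by rw [mul_comm, div_mul_cancel₀ _ (by linarith : (1:ℝ)-t ≠ 0)]
    have h6 : (1-t) ≤ (1+t) * Real.exp (-(2*t/(1-s^2))) := by
      rw [Real.exp_neg]
      have e := Real.exp_pos (2*t/(1-s^2))
      rw [mul_comm, inv_mul_eq_div, le_div_iff₀ e]
      linarith [h5]
    rw [hrel]
    nlinarith [mul_le_mul_of_nonneg_left h6 (phi_pos ((x-s)/w)).le]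

lemma Phibar_sum_le {a x : ℝ} (ha0 : 0 ≤ a) (ha1 : a < 1) (hx : Real.sqrt 3 ≤ x) :
    Phibar ((x-a)/Real.sqrt (1-a^2)) + Phibar ((x+a)/Real.sqrt (1-a^2)) ≤ 2 * Phibar x := by
  set F : ℝ → ℝ := fun s => Phibar ((x-s)/Real.sqrt (1-s^2)) + Phibar ((x+s)/Real.sqrt (1-s^2)) with hF
  have hF0 : F 0 = 2 * Phibar x := by
    simp [hF, Real.sqrt_one]
    ring
  have hFd : ∀ s, 0 < s → s < 1 → HasDerivAt F
      (-(phi ((x-s)/Real.sqrt (1-s^2)) * (s*x-1) + phi ((x+s)/Real.sqrt (1-s^2)) * (s*x+1))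
        /((1-s^2)*Real.sqrt (1-s^2))) s := by
    intro s hs0 hs1
    have hs2 : (0:ℝ) < 1 - s^2 := by nlinarith
    have hwpos : 0 < Real.sqrt (1-s^2) := Real.sqrt_pos.mpr hs2
    have hwsq : (Real.sqrt (1-s^2))^2 = 1-s^2 := Real.sq_sqrt hs2.le
    have hw' : HasDerivAt (fun s : ℝ => Real.sqrt (1-s^2)) (-s/Real.sqrt (1-s^2)) s := by
      have h0 : HasDerivAt (fun s : ℝ => 1-s^2) (-(2*s)) s := by
        simpa using (hasDerivAt_pow 2 s).const_sub 1
      have := (Real.hasDerivAt_sqrt hs2.ne').comp s h0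
      refine this.congr_deriv ?_
      field_simp
    have hu : HasDerivAt (fun s : ℝ => (x-s)/Real.sqrt (1-s^2))
        ((s*x-1)/((1-s^2)*Real.sqrt (1-s^2))) s := by
      have hnum : HasDerivAt (fun s : ℝ => x-s) (-1) s := by
        simpa using (hasDerivAt_id s).const_sub x
      have := hnum.div hw' hwpos.ne'
      refine this.congr_deriv ?_
      rw [hwsq]
      field_simp
      nlinarith [Real.sq_sqrt hs2.le]
    have hv : HasDerivAt (fun s : ℝ => (x+s)/Real.sqrt (1-s^2))
        ((s*x+1)/((1-s^2)*Real.sqrt (1-s^2))) s := by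
      have hnum : HasDerivAt (fun s : ℝ => x+s) 1 s := by
        simpa using (hasDerivAt_id s).const_add x
      have := hnum.div hw' hwpos.ne'
      refine this.congr_deriv ?_
      rw [hwsq]
      field_simp
      nlinarith [Real.sq_sqrt hs2.le]
    have hPu := (hasDerivAt_Phibar ((x-s)/Real.sqrt (1-s^2))).comp s hu
    have hPv := (hasDerivAt_Phibar ((x+s)/Real.sqrt (1-s^2))).comp s hv
    have := hPu.add hPv
    refine this.congr_deriv ?_
    field_simp
    ring
  have hanti : AntitoneOn F (Icc 0 a) := by
    apply antitoneOn_of_deriv_nonpos (convex_Icc _ _)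
    · have hcw : ContinuousOn (fun s : ℝ => Real.sqrt (1-s^2)) (Icc 0 a) :=
        (Real.continuous_sqrt.comp (by fun_prop)).continuousOn
      have hne : ∀ s ∈ Icc (0:ℝ) a, Real.sqrt (1-s^2) ≠ 0 := by
        intro s hs
        have : (0:ℝ) < 1 - s^2 := by nlinarith [hs.1, hs.2]
        exact (Real.sqrt_pos.mpr this).ne'
      exact (Phibar_cont.comp_continuousOn
          (((continuous_const.sub continuous_id).continuousOn).div hcw hne)).add
        (Phibar_cont.comp_continuousOn
          (((continuous_const.add continuous_id).continuousOn).div hcw hne))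
    · intro s hs
      rw [interior_Icc] at hs
      exact (hFd s hs.1 (lt_of_le_of_lt hs.2.le ha1)).differentiableAt.differentiableWithinAt
    · intro s hs
      rw [interior_Icc] at hs
      have hs1 : s < 1 := lt_of_le_of_lt hs.2.le ha1
      rw [(hFd s hs.1 hs1).deriv]
      apply div_nonpos_of_nonpos_of_nonneg
      · exact neg_nonpos.mpr (key_ineq hx hs.1 hs1)
      · have hs2 : (0:ℝ) < 1 - s^2 := by nlinarith [hs.1]
        positivity
  have := hanti (left_mem_Icc.mpr ha0) (right_mem_Icc.mpr ha0) ha0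
  rw [hF0] at this
  exact this

lemma one_lt_sqrt2 : (1:ℝ) < Real.sqrt 2 := by
  rw [show (1:ℝ) = Real.sqrt 1 from (Real.sqrt_one).symm]
  exact Real.sqrt_lt_sqrt (by norm_num) (by norm_num)

lemma h1_le_of_ge {t : ℝ} (ht : Real.sqrt 2 ≤ t) : h1 t ≤ c2 * Phibar t := by
  have h1t : (1:ℝ) < t := lt_of_lt_of_le one_lt_sqrt2 ht
  unfold h1
  rw [if_neg (by linarith), if_neg (by linarith), if_neg (not_lt.mpr ht)]
  by_cases h3 : t ≤ Real.sqrt 3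
  · rw [if_pos h3]
    exact g_le_h ht h3
  · rw [if_neg h3]
    exact le_of_eq rfl

lemma h1_eq_of_ge {t : ℝ} (ht : Real.sqrt 3 ≤ t) : h1 t = c2 * Phibar t := by
  have ht2 : Real.sqrt 2 ≤ t := le_trans (Real.sqrt_le_sqrt (by norm_num)) ht
  have h1t : (1:ℝ) < t := lt_of_lt_of_le one_lt_sqrt2 ht2
  unfold h1
  rw [if_neg (by linarith), if_neg (by linarith), if_neg (not_lt.mpr ht2)]
  by_cases h3 : t ≤ Real.sqrt 3
  · rw [if_pos h3, le_antisymm h3 ht, g_eq_h_sqrt3]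
    rfl
  · rw [if_neg h3]
    rfl

lemma c2_nonneg : 0 ≤ c2 := by
  have hm : 0 < mills (Real.sqrt 3) := div_pos (phi_pos _) (Phibar_pos _)
  have := c1_pos
  unfold c2
  nlinarith

theorem K_nonpos_large_x (a x : ℝ) (ha0 : 0 ≤ a) (ha1 : a < 1)
    (hx : Real.sqrt 3 ≤ x) :
    h1 ((x - a) / Real.sqrt (1 - a^2)) + h1 ((x + a) / Real.sqrt (1 - a^2))
      - 2 * h1 x ≤ 0 := by
  have hx0 : (0:ℝ) < x := lt_of_lt_of_le (by positivity) hx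
  have hx3 : (3:ℝ) ≤ x^2 := by
    nlinarith [Real.sq_sqrt (by norm_num : (0:ℝ) ≤ 3), Real.sqrt_nonneg 3]
  have ha2 : (0:ℝ) < 1 - a^2 := by nlinarith
  have hwpos : 0 < Real.sqrt (1-a^2) := Real.sqrt_pos.mpr ha2
  have hxa : 0 ≤ x - a := by
    have : Real.sqrt 3 ≥ 1 := by
      rw [show (1:ℝ) = Real.sqrt 1 from (Real.sqrt_one).symm]
      exact Real.sqrt_le_sqrt (by norm_num)
    linarith
  have hu2 : Real.sqrt 2 ≤ (x - a) / Real.sqrt (1 - a^2) := by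
    rw [le_div_iff₀ hwpos, ← Real.sqrt_mul (by norm_num : (0:ℝ) ≤ 2)]
    calc Real.sqrt (2*(1-a^2)) ≤ Real.sqrt ((x-a)^2) :=
          Real.sqrt_le_sqrt (by nlinarith [sq_nonneg (a*x-1)])
      _ = x - a := Real.sqrt_sq hxa
  have hv2 : Real.sqrt 2 ≤ (x + a) / Real.sqrt (1 - a^2) := by
    refine le_trans hu2 ?_
    gcongr
    linarith
  have hU := h1_le_of_ge hu2
  have hV := h1_le_of_ge hv2
  have hX := h1_eq_of_ge hx
  have hsum := Phibar_sum_le ha0 ha1 hx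
  have hkey : c2 * (Phibar ((x-a)/Real.sqrt (1-a^2)) + Phibar ((x+a)/Real.sqrt (1-a^2)))
      ≤ c2 * (2 * Phibar x) := mul_le_mul_of_nonneg_left hsum c2_nonneg
  rw [hX]
  nlinarith [hU, hV, hkey]
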